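/- For any graph G and any l ≥ 0, the alternating sum of ranks of the magnitude homology groups equals the l-th coefficient of the magnitude: ∑_{k≥0} (−1)^k · rank(MH_{k,l}(G)) = ∑_{k≥0} (−1)^k · |{(x_0,…,x_k) ∈ V(G)^{k+1} : x_i ≠ x_{i+1} for all i, ℓ(x_0,…,x_k) = l}| = c_l(G). (Both sums are finite, since the terms vanish for k > l.) Equivalently, the graded Euler characteristic of magnitude homology is the magnitude power series #G = ∑_l c_l(G) q^l. -/

import Mathlib

noncomputable section

namespace MagnitudeHomology

open Classical

variable {V : Type*} {W : Type*}

/-- The length `ℓ(x₀,…,x_k)` of a tuple of vertices: the sum of consecutive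
(extended) shortest-path distances. -/
def tupleLen (G : SimpleGraph V) {k : ℕ} (x : Fin (k + 1) → V) : ℕ∞ :=
  ∑ i : Fin k, G.edist (x i.castSucc) (x i.succ)

/-- The condition defining the generators of `MC_{k,l}(G)`: consecutive entries
distinct and total length `l`. -/
def IsMagTuple (G : SimpleGraph V) (l : ℕ) {k : ℕ} (x : Fin (k + 1) → V) : Prop :=
  (∀ i : Fin k, x i.castSucc ≠ x i.succ) ∧ tupleLen G x = (l : ℕ∞)

/-- The generating tuples of the magnitude chain group `MC_{k,l}(G)`. -/
def MagTuple (G : SimpleGraph V) (k l : ℕ) : Type _ :=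
  {x : Fin (k + 1) → V // IsMagTuple G l x}

/-- The magnitude chain group `MC_{k,l}(G)`: the free abelian group on tuples
`(x₀,…,x_k)` with consecutive entries distinct and length `l`. -/
def MC (G : SimpleGraph V) (k l : ℕ) : Type _ :=
  FreeAbelianGroup (MagTuple G k l)

instance (G : SimpleGraph V) (k l : ℕ) : AddCommGroup (MC G k l) :=
  inferInstanceAs (AddCommGroup (FreeAbelianGroup _))

/-- The generator of `MC_{k,l}(G)` corresponding to a tuple, or `0` if the tuple
does not satisfy the defining conditions. -/
def mcGen (G : SimpleGraph V) {k : ℕ} (l : ℕ) (x : Fin (k + 1) → V) : MC G k l :=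
  if h : IsMagTuple G l x then FreeAbelianGroup.of (⟨x, h⟩ : MagTuple G k l) else 0

/-- The magnitude differential `∂ = ∑_{i=1}^{k} (-1)^i ∂_i : MC_{k+1,l}(G) → MC_{k,l}(G)`,
where `∂_i` omits the `i`-th entry if this preserves the length, and is `0` otherwise. -/
def magDiff (G : SimpleGraph V) (k l : ℕ) : MC G (k + 1) l →+ MC G k l :=
  FreeAbelianGroup.lift fun (x : MagTuple G (k + 1) l) =>
    ∑ i : Fin k, ((-1 : ℤ) ^ ((i : ℕ) + 1)) •
      mcGen G l (x.1 ∘ Fin.succAbove i.succ.castSucc)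

/-- The subgroup of cycles: everything in degree `0`, the kernel of `∂` in
positive degrees. -/
def magCycles (G : SimpleGraph V) (l : ℕ) : (k : ℕ) → AddSubgroup (MC G k l)
  | 0 => ⊤
  | (k + 1) => (magDiff G k l).ker

/-- The boundaries, viewed as a subgroup of the cycles. -/
def magBoundaries (G : SimpleGraph V) (k l : ℕ) : AddSubgroup (magCycles G l k) :=
  ((magDiff G k l).range).addSubgroupOf (magCycles G l k)

/-- Magnitude homology `MH_{k,l}(G) = H_k(MC_{*,l}(G))`. -/
def MH (G : SimpleGraph V) (k l : ℕ) : Type _ :=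
  magCycles G l k ⧸ magBoundaries G k l

instance (G : SimpleGraph V) (k l : ℕ) : AddCommGroup (MH G k l) :=
  inferInstanceAs (AddCommGroup (_ ⧸ _))

/-- The homology class of a chain: its class if it is a cycle, `0` otherwise. -/
def mkMH (G : SimpleGraph V) (k l : ℕ) (z : MC G k l) : MH G k l :=
  if h : z ∈ magCycles G l k then QuotientAddGroup.mk ⟨z, h⟩ else 0

/-- The `l`-th coefficient `c_l(G)` of the magnitude power series `#G`. -/
def magCoeff (G : SimpleGraph V) (l : ℕ) : ℤ :=
  ∑ k ∈ Finset.range (l + 1), (-1 : ℤ) ^ k * (Nat.card (MagTuple G k l) : ℤ)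

/-- Deleting the `(i+1)`-st entry of a tuple. -/
def del {n : ℕ} (i : Fin n) (x : Fin (n + 2) → V) : Fin (n + 1) → V :=
  x ∘ Fin.succAbove i.succ.castSucc

lemma val_succAbove {n : ℕ} (p : Fin (n + 1)) (m : Fin n) :
    ((p.succAbove m : Fin (n + 1)) : ℕ) = if (m : ℕ) < (p : ℕ) then (m : ℕ) else (m : ℕ) + 1 := by
  rw [Fin.succAbove]
  split_ifs with h1 h2 h2 <;> simp_all [Fin.lt_def]

lemma idx_lt {n : ℕ} (i : Fin n) :
    (Fin.succAbove (i.succ.castSucc) i.castSucc : Fin (n + 2)) = i.castSucc.castSucc := by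
  apply Fin.ext
  rw [val_succAbove]
  simp

lemma idx_eq {n : ℕ} (i : Fin n) :
    (Fin.succAbove (i.succ.castSucc) i.succ : Fin (n + 2)) = i.succ.succ := by
  apply Fin.ext
  rw [val_succAbove]
  simp

lemma idx_ne₁ {n : ℕ} (i : Fin n) (m : Fin n) (h : m ≠ i) :
    (Fin.succAbove (i.succ.castSucc) m.castSucc : Fin (n + 2))
      = (i.castSucc.succAbove m).castSucc := by
  have hv : (m : ℕ) ≠ (i : ℕ) := fun he => h (Fin.ext he)
  apply Fin.ext
  have h2 : ((i.castSucc.succAbove m) : ℕ)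
      = if (m : ℕ) < (i : ℕ) then (m : ℕ) else (m : ℕ) + 1 := by
    rw [val_succAbove]; simp
  rw [val_succAbove]
  simp only [Fin.coe_castSucc, Fin.val_succ, h2]
  split_ifs <;> omega

lemma idx_ne₂ {n : ℕ} (i : Fin n) (m : Fin n) :
    (Fin.succAbove (i.succ.castSucc) m.succ : Fin (n + 2))
      = (i.castSucc.succAbove m).succ := by
  apply Fin.ext
  have h2 : ((i.castSucc.succAbove m) : ℕ)
      = if (m : ℕ) < (i : ℕ) then (m : ℕ) else (m : ℕ) + 1 := by
    rw [val_succAbove]; simp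
  rw [val_succAbove]
  simp only [Fin.coe_castSucc, Fin.val_succ, h2]
  split_ifs <;> omega

lemma idx_diag {n : ℕ} (i : Fin n) :
    (i.castSucc.succAbove i : Fin (n + 1)) = i.succ := by
  apply Fin.ext
  rw [val_succAbove]
  simp

/-- The key length identity for deleting an interior entry. -/
lemma tupleLen_del {n : ℕ} (G : SimpleGraph V) (x : Fin (n + 2) → V) (i : Fin n) :
    tupleLen G (del i x) + G.edist (x i.castSucc.castSucc) (x i.succ.castSucc)
      + G.edist (x i.succ.castSucc) (x i.succ.succ)
    = tupleLen G x + G.edist (x i.castSucc.castSucc) (x i.succ.succ) := by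
  classical
  set f : Fin (n + 1) → ℕ∞ := fun m => G.edist (x m.castSucc) (x m.succ) with hf
  have hx : tupleLen G x
      = f i.castSucc + ∑ m : Fin n, f (i.castSucc.succAbove m) := by
    rw [show tupleLen G x = ∑ m : Fin (n + 1), f m from rfl]
    exact Fin.sum_univ_succAbove f i.castSucc
  have hsplit : ∑ m : Fin n, f (i.castSucc.succAbove m)
      = f (i.castSucc.succAbove i)
        + ∑ m ∈ Finset.univ.erase i, f (i.castSucc.succAbove m) :=
    (Finset.add_sum_erase _ _ (Finset.mem_univ i)).symm
  set g : Fin n → ℕ∞ := fun m => G.edist (del i x m.castSucc) (del i x m.succ) with hg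
  have hy : tupleLen G (del i x) = g i + ∑ m ∈ Finset.univ.erase i, g m :=
    (Finset.add_sum_erase _ _ (Finset.mem_univ i)).symm
  have hgi : g i = G.edist (x i.castSucc.castSucc) (x i.succ.succ) := by
    simp only [hg, del, Function.comp_apply, idx_lt, idx_eq]
  have hgf : ∀ m ∈ Finset.univ.erase i, g m = f (i.castSucc.succAbove m) := by
    intro m hm
    have hmi : m ≠ i := (Finset.mem_erase.mp hm).1
    simp only [hg, hf, del, Function.comp_apply, idx_ne₁ i m hmi, idx_ne₂ i m]
  have hfc : f i.castSucc = G.edist (x i.castSucc.castSucc) (x i.succ.castSucc) := by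
    simp only [hf, Fin.succ_castSucc]
  have hfd : f (i.castSucc.succAbove i) = G.edist (x i.succ.castSucc) (x i.succ.succ) := by
    rw [idx_diag]
  rw [hy, hgi, Finset.sum_congr rfl hgf, hx, hsplit, hfc, hfd]
  ring

lemma edist_le_tupleLen {n : ℕ} (G : SimpleGraph V) (x : Fin (n + 1) → V) (m : Fin n) :
    G.edist (x m.castSucc) (x m.succ) ≤ tupleLen G x := by
  have := Finset.single_le_sum (f := fun m : Fin n => G.edist (x m.castSucc) (x m.succ))
    (fun _ _ => zero_le) (Finset.mem_univ m)
  exact this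

lemma tupleLen_del_le {n : ℕ} (G : SimpleGraph V) (x : Fin (n + 2) → V) (i : Fin n)
    (hx : tupleLen G x ≠ ⊤) :
    tupleLen G (del i x) ≤ tupleLen G x := by
  have key := tupleLen_del G x i
  set s1 := G.edist (x i.castSucc.castSucc) (x i.succ.castSucc) with hs1
  set s2 := G.edist (x i.succ.castSucc) (x i.succ.succ) with hs2
  set t := G.edist (x i.castSucc.castSucc) (x i.succ.succ) with ht
  have htri : t ≤ s1 + s2 := SimpleGraph.edist_triangle
  have hs1le : s1 ≤ tupleLen G x := by
    have := edist_le_tupleLen G x i.castSucc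
    rwa [Fin.succ_castSucc] at this
  have hs2le : s2 ≤ tupleLen G x := edist_le_tupleLen G x i.succ
  have hstop : s1 + s2 ≠ ⊤ := by
    intro hc
    rcases WithTop.add_eq_top.mp hc with h | h
    · exact hx (top_le_iff.mp (h ▸ hs1le))
    · exact hx (top_le_iff.mp (h ▸ hs2le))
  have h1 : tupleLen G (del i x) + (s1 + s2) ≤ tupleLen G x + (s1 + s2) := by
    rw [← add_assoc, key]
    exact add_le_add (le_refl _) htri
  exact (WithTop.add_le_add_iff_right hstop).mp h1

lemma isMagTuple_del_iff {n : ℕ} (G : SimpleGraph V) (l : ℕ) (x : Fin (n + 2) → V)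
    (hd : ∀ m : Fin (n + 1), x m.castSucc ≠ x m.succ) (hl : tupleLen G x = (l : ℕ∞))
    (i : Fin n) :
    IsMagTuple G l (del i x) ↔ tupleLen G (del i x) = (l : ℕ∞) := by
  constructor
  · exact fun h => h.2
  · intro hlen
    refine ⟨?_, hlen⟩
    intro m
    by_cases hmi : m = i
    · subst hmi
      have e1 : del m x m.castSucc = x m.castSucc.castSucc := by
        simp only [del, Function.comp_apply, idx_lt]
      have e2 : del m x m.succ = x m.succ.succ := by
        simp only [del, Function.comp_apply, idx_eq]
      rw [e1, e2]
      intro heq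
      have h0 : G.edist (x m.castSucc.castSucc) (x m.succ.succ) = 0 := by
        rw [heq]; exact SimpleGraph.edist_self
      have key := tupleLen_del G x m
      rw [hlen, hl, h0, add_zero, add_assoc] at key
      have hss : G.edist (x m.castSucc.castSucc) (x m.succ.castSucc)
          + G.edist (x m.succ.castSucc) (x m.succ.succ) = 0 := by
        have : (l : ℕ∞) + (G.edist (x m.castSucc.castSucc) (x m.succ.castSucc)
            + G.edist (x m.succ.castSucc) (x m.succ.succ)) = (l : ℕ∞) + 0 := by
          rw [add_zero]; exact key
        exact WithTop.add_left_cancel (ENat.coe_ne_top l) this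
      have hs1 : G.edist (x m.castSucc.castSucc) (x m.succ.castSucc) = 0 :=
        (add_eq_zero.mp hss).1
      have := SimpleGraph.edist_eq_zero_iff.mp hs1
      exact hd m.castSucc (by rwa [Fin.succ_castSucc])
    · have e1 : del i x m.castSucc = x (i.castSucc.succAbove m).castSucc := by
        simp only [del, Function.comp_apply, idx_ne₁ i m hmi]
      have e2 : del i x m.succ = x (i.castSucc.succAbove m).succ := by
        simp only [del, Function.comp_apply, idx_ne₂ i m]
      rw [e1, e2]
      exact hd (i.castSucc.succAbove m)


lemma magDiff_of (G : SimpleGraph V) (k l : ℕ) (x : MagTuple G (k + 1) l) :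
    magDiff G k l (FreeAbelianGroup.of x)
      = ∑ i : Fin k, ((-1 : ℤ) ^ ((i : ℕ) + 1)) • mcGen G l (del i x.1) :=
  FreeAbelianGroup.lift_apply_of _ _

lemma magDiff_mcGen {k l : ℕ} (G : SimpleGraph V) (y : Fin (k + 2) → V)
    (h1 : tupleLen G y ≤ (l : ℕ∞)) (h2 : tupleLen G y = (l : ℕ∞) → IsMagTuple G l y) :
    magDiff G k l (mcGen G l y)
      = ∑ j : Fin k, ((-1 : ℤ) ^ ((j : ℕ) + 1)) • mcGen G l (del j y) := by
  by_cases h : IsMagTuple G l y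
  · rw [show mcGen G l y = FreeAbelianGroup.of (⟨y, h⟩ : MagTuple G (k + 1) l) from dif_pos h]
    exact magDiff_of G k l ⟨y, h⟩
  · rw [show mcGen G l y = 0 from dif_neg h, map_zero]
    symm
    apply Finset.sum_eq_zero
    intro j _
    have hlt : tupleLen G y < (l : ℕ∞) := lt_of_le_of_ne h1 fun he => h (h2 he)
    have hle : tupleLen G (del j y) ≤ tupleLen G y :=
      tupleLen_del_le _ _ _ (by
        intro ht
        rw [ht] at hlt
        exact (not_top_lt hlt))
    have hn : ¬ IsMagTuple G l (del j y) := fun hh =>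
      absurd hh.2 (ne_of_lt (lt_of_le_of_lt hle hlt))
    rw [show mcGen G l (del j y) = 0 from dif_neg hn, smul_zero]

lemma magDiff_magDiff (G : SimpleGraph V) (k l : ℕ) (c : MC G (k + 2) l) :
    magDiff G k l (magDiff G (k + 1) l c) = 0 := by
  induction c using FreeAbelianGroup.induction_on with
  | zero =>
    show magDiff G k l (magDiff G (k + 1) l (0 : MC G (k + 2) l)) = 0
    simp
  | of x =>
    have hdx := x.2.1
    have hlx := x.2.2
    have hnt : tupleLen G x.1 ≠ ⊤ := by rw [hlx]; exact ENat.coe_ne_top l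
    rw [magDiff_of, map_sum]
    have hterm : ∀ i : Fin (k + 1),
        magDiff G k l (((-1 : ℤ) ^ ((i : ℕ) + 1)) • mcGen G l (del i x.1))
          = ∑ j : Fin k, ((-1 : ℤ) ^ ((i : ℕ) + 1 + ((j : ℕ) + 1)))
              • mcGen G l (del j (del i x.1)) := by
      intro i
      rw [map_zsmul, magDiff_mcGen G (del i x.1)
        (by rw [← hlx]; exact tupleLen_del_le G x.1 i hnt)
        (fun he => (isMagTuple_del_iff G l x.1 hdx hlx i).mpr he),
        Finset.smul_sum]
      congr 1
      funext j
      rw [smul_smul, ← pow_add]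
    rw [Finset.sum_congr rfl fun i _ => hterm i, ← Finset.sum_product']
    set T : Fin (k + 1) × Fin k → MC G k l := fun a =>
      ((-1 : ℤ) ^ ((a.1 : ℕ) + 1 + ((a.2 : ℕ) + 1))) • mcGen G l (del a.2 (del a.1 x.1)) with hT
    show ∑ a ∈ Finset.univ ×ˢ Finset.univ, T a = 0
    -- the involution swapping the two deleted positions
    have key : ∀ (i : Fin (k + 1)) (j : Fin k) (h : (j : ℕ) + 1 ≤ (i : ℕ)),
        T (i, j) = - T (j.castSucc, ⟨(i : ℕ) - 1, by omega⟩) := by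
      intro i j hji
      have hfun : del (⟨(i : ℕ) - 1, by omega⟩ : Fin k) (del j.castSucc x.1)
          = del j (del i x.1) := by
        funext m
        show x.1 _ = x.1 _
        refine congrArg x.1 ?_
        apply Fin.ext
        have hO : ∀ (p : Fin (k + 1)) (w : Fin (k + 2)),
            ((Fin.succAbove (p.succ.castSucc) w : Fin (k + 3)) : ℕ)
              = if (w : ℕ) < (p : ℕ) + 1 then (w : ℕ) else (w : ℕ) + 1 := by
          intro p w
          rw [val_succAbove]; simp
        have e1 : ((Fin.succAbove (j.succ.castSucc) m : Fin (k + 2)) : ℕ)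
            = if (m : ℕ) < (j : ℕ) + 1 then (m : ℕ) else (m : ℕ) + 1 := by
          rw [val_succAbove]; simp
        have e2 : (((Fin.succAbove ((⟨(i : ℕ) - 1, by omega⟩ : Fin k).succ.castSucc) m
            : Fin (k + 2))) : ℕ)
            = if (m : ℕ) < ((i : ℕ) - 1) + 1 then (m : ℕ) else (m : ℕ) + 1 := by
          rw [val_succAbove]; simp
        rw [hO, hO, e1, e2]
        simp only [Fin.coe_castSucc, Fin.val_succ]
        split_ifs <;> omega
      have hexp : (i : ℕ) + 1 + ((j : ℕ) + 1)
          = ((j.castSucc : ℕ) + 1 + ((((⟨(i : ℕ) - 1, by omega⟩ : Fin k) : ℕ)) + 1)) + 1 := by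
        simp only [Fin.coe_castSucc]
        omega
      rw [hT]
      simp only [hfun]
      rw [hexp, pow_succ, mul_smul]
      simp
    have hlt1 : ∀ a : Fin (k + 1) × Fin k, (a.1 : ℕ) - 1 < k := by
      intro a
      have h1 := a.1.isLt
      have h2 := a.2.isLt
      omega
    have hlt2 : ∀ a : Fin (k + 1) × Fin k, ¬ ((a.2 : ℕ) + 1 ≤ (a.1 : ℕ)) → (a.1 : ℕ) < k := by
      intro a h
      have h2 := a.2.isLt
      omega
    set σ : Fin (k + 1) × Fin k → Fin (k + 1) × Fin k := fun a =>
      if h : (a.2 : ℕ) + 1 ≤ (a.1 : ℕ)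
        then (a.2.castSucc, ⟨(a.1 : ℕ) - 1, hlt1 a⟩)
        else (a.2.succ, ⟨(a.1 : ℕ), hlt2 a h⟩) with hσ
    apply Finset.sum_ninvolution σ
    · intro a
      by_cases h : (a.2 : ℕ) + 1 ≤ (a.1 : ℕ)
      · simp only [hσ]
        rw [dif_pos h]
        have := key a.1 a.2 h
        rw [show ((a.1 : Fin (k + 1)), (a.2 : Fin k)) = a from rfl] at this
        rw [this]
        simp
      · simp only [hσ]
        rw [dif_neg h]
        have h2 : ((⟨(a.1 : ℕ), hlt2 a h⟩ : Fin k) : ℕ) + 1 ≤ ((a.2.succ : Fin (k + 1)) : ℕ) := by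
          simp only [Fin.val_succ]
          omega
        have := key a.2.succ ⟨(a.1 : ℕ), hlt2 a h⟩ h2
        have hback : (((⟨(a.1 : ℕ), hlt2 a h⟩ : Fin k)).castSucc,
            (⟨((a.2.succ : Fin (k + 1)) : ℕ) - 1, by omega⟩ : Fin k)) = a := by
          apply Prod.ext
          · apply Fin.ext; simp
          · apply Fin.ext; simp
        rw [hback] at this
        rw [this]
        simp
    · intro a _
      by_cases h : (a.2 : ℕ) + 1 ≤ (a.1 : ℕ)
      · simp only [hσ]
        rw [dif_pos h]
        intro he
        have := congrArg (fun p : Fin (k + 1) × Fin k => (p.1 : ℕ)) he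
        simp only [Fin.coe_castSucc] at this
        omega
      · simp only [hσ]
        rw [dif_neg h]
        intro he
        have := congrArg (fun p : Fin (k + 1) × Fin k => (p.1 : ℕ)) he
        simp only [Fin.val_succ] at this
        omega
    · intro a
      exact Finset.mem_product.mpr ⟨Finset.mem_univ _, Finset.mem_univ _⟩
    · intro a
      by_cases h : (a.2 : ℕ) + 1 ≤ (a.1 : ℕ)
      · simp only [hσ]
        rw [dif_pos h, dif_neg (by simp only [Fin.coe_castSucc]; omega)]
        apply Prod.ext
        · apply Fin.ext; simp; omega
        · apply Fin.ext; simp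
      · simp only [hσ]
        rw [dif_neg h, dif_pos (by simp only [Fin.val_succ]; omega)]
        apply Prod.ext
        · apply Fin.ext; simp
        · apply Fin.ext; simp
  | neg x hx =>
    exact ((congrArg (magDiff G k l) ((magDiff G (k + 1) l).map_neg (FreeAbelianGroup.of x))).trans
      ((magDiff G k l).map_neg _)).trans (by rw [hx, neg_zero])
  | add x y hx hy =>
    exact ((congrArg (magDiff G k l) ((magDiff G (k + 1) l).map_add x y)).trans
      ((magDiff G k l).map_add _ _)).trans (by rw [hx, hy, add_zero])


/-- Transfer `finrank` along an additive equivalence. -/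
lemma finrank_addEquiv {A B : Type*} [AddCommGroup A] [AddCommGroup B] (e : A ≃+ B) :
    Module.finrank ℤ A = Module.finrank ℤ B :=
  e.toIntLinearEquiv.finrank_eq

/-- An additive equivalence between an `AddSubgroup` and a `Submodule` with the
same membership predicate. -/
def subAddEquiv {M : Type*} [AddCommGroup M] (S : AddSubgroup M) (T : Submodule ℤ M)
    (h : ∀ x, x ∈ S ↔ x ∈ T) : S ≃+ T where
  toFun x := ⟨x.1, (h _).1 x.2⟩
  invFun x := ⟨x.1, (h _).2 x.2⟩
  left_inv _ := rfl
  right_inv _ := rfl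
  map_add' _ _ := rfl

instance magTupleFinite {V : Type*} [Finite V] (G : SimpleGraph V) (k l : ℕ) :
    Finite (MagTuple G k l) :=
  inferInstanceAs (Finite {x : Fin (k + 1) → V // IsMagTuple G l x})

def mcEquiv (G : SimpleGraph V) (k l : ℕ) : MC G k l ≃+ (MagTuple G k l →₀ ℤ) :=
  FreeAbelianGroup.equivFinsupp _

lemma finrank_MC {V : Type*} [Fintype V] (G : SimpleGraph V) (k l : ℕ) :
    Module.finrank ℤ (MC G k l) = Nat.card (MagTuple G k l) := by
  haveI : Fintype (MagTuple G k l) := Fintype.ofFinite _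
  rw [finrank_addEquiv (mcEquiv G k l), Module.finrank_finsupp_self, Nat.card_eq_fintype_card]

lemma rank_MC_lt {V : Type*} [Fintype V] (G : SimpleGraph V) (k l : ℕ) :
    Module.rank ℤ (MC G k l) < Cardinal.aleph0 := by
  rw [(mcEquiv G k l).toIntLinearEquiv.rank_eq, rank_finsupp_self]
  exact Cardinal.lift_lt_aleph0.mpr (Cardinal.lt_aleph0_of_finite _)

lemma rank_addSubgroup_lt {V : Type*} [Fintype V] {G : SimpleGraph V} {k l : ℕ}
    (S : AddSubgroup (MC G k l)) : Module.rank ℤ S < Cardinal.aleph0 := by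
  have e := subAddEquiv S (AddSubgroup.toIntSubmodule S) (fun x => Iff.rfl)
  rw [e.toIntLinearEquiv.rank_eq]
  exact lt_of_le_of_lt (Submodule.rank_le _) (rank_MC_lt G k l)

lemma rank_submodule_lt {V : Type*} [Fintype V] {G : SimpleGraph V} {k l : ℕ}
    (S : Submodule ℤ (MC G k l)) : Module.rank ℤ S < Cardinal.aleph0 :=
  lt_of_le_of_lt (Submodule.rank_le _) (rank_MC_lt G k l)

set_option maxHeartbeats 1000000 in
/-- Rank–nullity for the magnitude differential. -/
lemma finrank_MC_succ {V : Type*} [Fintype V] (G : SimpleGraph V) (k l : ℕ) :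
    Module.finrank ℤ (MC G (k + 1) l)
      = Module.finrank ℤ (magCycles G l (k + 1))
        + Module.finrank ℤ (LinearMap.range (magDiff G k l).toIntLinearMap) := by
  set f := (magDiff G k l).toIntLinearMap with hfd
  have hr := LinearMap.rank_range_add_rank_ker f
  have h1 : Module.rank ℤ (LinearMap.range f) < Cardinal.aleph0 := rank_submodule_lt _
  have h2 : Module.rank ℤ (LinearMap.ker f) < Cardinal.aleph0 := rank_submodule_lt _
  have := congrArg Cardinal.toNat hr
  rw [Cardinal.toNat_add h1 h2] at this
  have hker : Module.finrank ℤ (LinearMap.ker f) = Module.finrank ℤ (magCycles G l (k + 1)) :=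
    (finrank_addEquiv (subAddEquiv (magCycles G l (k + 1)) (LinearMap.ker f)
      fun x => Iff.rfl)).symm
  simp only [Module.finrank] at this hker ⊢
  rw [← this, ← hker]
  omega


set_option maxHeartbeats 1000000 in
lemma range_le_cycles (G : SimpleGraph V) (k l : ℕ) :
    (magDiff G k l).range ≤ magCycles G l k := by
  match k with
  | 0 => exact le_top
  | (k + 1) =>
    rintro x ⟨c, rfl⟩
    show magDiff G (k + 1) l c ∈ (magDiff G k l).ker
    rw [AddMonoidHom.mem_ker]
    exact magDiff_magDiff G k l c

set_option maxHeartbeats 1000000 in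
lemma finrank_MH_add {V : Type*} [Fintype V] (G : SimpleGraph V) (k l : ℕ) :
    Module.finrank ℤ (MH G k l)
      + Module.finrank ℤ (LinearMap.range (magDiff G k l).toIntLinearMap)
      = Module.finrank ℤ (magCycles G l k) := by
  have e1 : (magBoundaries G k l) ≃+ ((magDiff G k l).range) :=
    AddSubgroup.addSubgroupOfEquivOfLe (range_le_cycles G k l)
  have e2 : ((magDiff G k l).range : AddSubgroup (MC G k l))
      ≃+ (LinearMap.range (magDiff G k l).toIntLinearMap) :=
    subAddEquiv _ _ fun x => Iff.rfl
  let q : magCycles G l k →+ MH G k l := QuotientAddGroup.mk' (magBoundaries G k l)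
  have hsurj : Function.Surjective q := QuotientAddGroup.mk'_surjective _
  have hq := LinearMap.rank_eq_of_surjective (f := q.toIntLinearMap) hsurj
  have hmem : ∀ x, x ∈ magBoundaries G k l ↔ x ∈ LinearMap.ker q.toIntLinearMap := by
    intro x
    rw [LinearMap.mem_ker]
    show _ ↔ q x = 0
    conv_lhs => rw [← QuotientAddGroup.ker_mk' (magBoundaries G k l)]
    exact AddMonoidHom.mem_ker
  have e3 : (magBoundaries G k l) ≃+ LinearMap.ker q.toIntLinearMap :=
    subAddEquiv _ _ hmem
  have hcyc : Module.rank ℤ (magCycles G l k) < Cardinal.aleph0 :=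
    rank_addSubgroup_lt _
  have hMHlt : Module.rank ℤ (MH G k l) < Cardinal.aleph0 :=
    lt_of_le_of_lt (hq ▸ self_le_add_right _ _) hcyc
  have hklt : Module.rank ℤ (LinearMap.ker q.toIntLinearMap) < Cardinal.aleph0 :=
    lt_of_le_of_lt (hq ▸ self_le_add_left _ _) hcyc
  have htn := congrArg Cardinal.toNat hq
  rw [Cardinal.toNat_add hMHlt hklt] at htn
  have hchain : Module.finrank ℤ (LinearMap.ker q.toIntLinearMap)
      = Module.finrank ℤ (LinearMap.range (magDiff G k l).toIntLinearMap) :=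
    finrank_addEquiv (e3.symm.trans (e1.trans e2))
  simp only [Module.finrank] at htn hchain ⊢
  omega

lemma magTuple_top_isEmpty (G : SimpleGraph V) (l : ℕ) :
    IsEmpty (MagTuple G (l + 1) l) := by
  constructor
  rintro ⟨x, hd, hlen⟩
  have h1 : ∀ m : Fin (l + 1), (1 : ℕ∞) ≤ G.edist (x m.castSucc) (x m.succ) := by
    intro m
    rw [ENat.one_le_iff_ne_zero]
    exact fun h0 => hd m (SimpleGraph.edist_eq_zero_iff.mp h0)
  have h2 : ((l + 1 : ℕ) : ℕ∞) ≤ ((l : ℕ) : ℕ∞) := by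
    rw [← hlen]
    calc ((l + 1 : ℕ) : ℕ∞) = ∑ _m : Fin (l + 1), (1 : ℕ∞) := by simp
    _ ≤ tupleLen G x := Finset.sum_le_sum fun m _ => h1 m
  have : l + 1 ≤ l := by exact_mod_cast h2
  omega

set_option maxHeartbeats 1000000 in
lemma finrank_range_top {V : Type*} [Fintype V] (G : SimpleGraph V) (l : ℕ) :
    Module.finrank ℤ (LinearMap.range (magDiff G l l).toIntLinearMap) = 0 := by
  haveI he := magTuple_top_isEmpty G l
  haveI : Subsingleton (MagTuple G (l + 1) l →₀ ℤ) :=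
    ⟨fun a b => Finsupp.ext fun x => (he.false x).elim⟩
  haveI : Subsingleton (MC G (l + 1) l) := (mcEquiv G (l + 1) l).toEquiv.subsingleton
  have hbot : LinearMap.range (magDiff G l l).toIntLinearMap = ⊥ := by
    rw [LinearMap.range_eq_bot]
    apply LinearMap.ext
    intro c
    rw [Subsingleton.elim c 0, map_zero]
    rfl
  rw [hbot]
  exact finrank_bot ℤ (MC G l l)


set_option maxHeartbeats 1000000 in
/-- For any finite graph `G` and any `l ≥ 0`, the alternating sum of
the ranks of the magnitude homology groups equals the `l`-th coefficient of the
magnitude: `∑_{k} (-1)^k · rank MH_{k,l}(G) = c_l(G)` (both sums are finite, the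
terms vanishing for `k > l`); i.e. the graded Euler characteristic of magnitude
homology is the magnitude `#G`. -/
theorem euler_characteristic {V : Type*} [Fintype V] (G : SimpleGraph V) (l : ℕ) :
    ∑ k ∈ Finset.range (l + 1), (-1 : ℤ) ^ k * (Module.finrank ℤ (MH G k l) : ℤ) =
      magCoeff G l := by
  classical
  have h0 : Module.finrank ℤ (magCycles G l 0) = Nat.card (MagTuple G 0 l) := by
    have e : (magCycles G l 0) ≃+ MC G 0 l := AddSubgroup.topEquiv
    rw [finrank_addEquiv e, finrank_MC]
  have hsucc : ∀ k, Nat.card (MagTuple G (k + 1) l)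
      = Module.finrank ℤ (magCycles G l (k + 1))
        + Module.finrank ℤ (LinearMap.range (magDiff G k l).toIntLinearMap) := by
    intro k
    rw [← finrank_MC G (k + 1) l, finrank_MC_succ]
  have hval : ∀ k, (Module.finrank ℤ (MH G k l) : ℤ)
      = (Nat.card (MagTuple G k l) : ℤ)
        - (if k = 0 then 0 else
            (Module.finrank ℤ (LinearMap.range (magDiff G (k - 1) l).toIntLinearMap) : ℤ))
        - (Module.finrank ℤ (LinearMap.range (magDiff G k l).toIntLinearMap) : ℤ) := by
    intro k
    cases k with
    | zero =>
      have hm := finrank_MH_add G 0 l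
      rw [if_pos rfl]
      omega
    | succ n =>
      have hm := finrank_MH_add G (n + 1) l
      have hs := hsucc n
      rw [if_neg (Nat.succ_ne_zero n)]
      show _ = _ - (Module.finrank ℤ (LinearMap.range (magDiff G n l).toIntLinearMap) : ℤ) - _
      omega
  have hterm : ∀ k, (-1 : ℤ) ^ k * (Module.finrank ℤ (MH G k l) : ℤ)
      = (-1 : ℤ) ^ k * (Nat.card (MagTuple G k l) : ℤ)
        - ((-1 : ℤ) ^ k * (if k = 0 then 0 else
            (Module.finrank ℤ (LinearMap.range (magDiff G (k - 1) l).toIntLinearMap) : ℤ))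
          + (-1 : ℤ) ^ k
            * (Module.finrank ℤ (LinearMap.range (magDiff G k l).toIntLinearMap) : ℤ)) := by
    intro k
    rw [hval k]
    ring
  rw [Finset.sum_congr rfl fun k _ => hterm k, Finset.sum_sub_distrib,
    Finset.sum_add_distrib]
  have eA : ∑ k ∈ Finset.range (l + 1), (-1 : ℤ) ^ k * (if k = 0 then 0 else
        (Module.finrank ℤ (LinearMap.range (magDiff G (k - 1) l).toIntLinearMap) : ℤ))
      = ∑ k ∈ Finset.range l, (-1 : ℤ) ^ (k + 1)
          * (Module.finrank ℤ (LinearMap.range (magDiff G k l).toIntLinearMap) : ℤ) := by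
    rw [Finset.sum_range_succ']
    simp
  have eB : ∑ k ∈ Finset.range (l + 1), (-1 : ℤ) ^ k
        * (Module.finrank ℤ (LinearMap.range (magDiff G k l).toIntLinearMap) : ℤ)
      = ∑ k ∈ Finset.range l, (-1 : ℤ) ^ k
          * (Module.finrank ℤ (LinearMap.range (magDiff G k l).toIntLinearMap) : ℤ) := by
    rw [Finset.sum_range_succ, finrank_range_top]
    simp
  rw [eA, eB, ← Finset.sum_add_distrib]
  have hz : ∑ k ∈ Finset.range l, ((-1 : ℤ) ^ (k + 1)
        * (Module.finrank ℤ (LinearMap.range (magDiff G k l).toIntLinearMap) : ℤ)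
      + (-1 : ℤ) ^ k
        * (Module.finrank ℤ (LinearMap.range (magDiff G k l).toIntLinearMap) : ℤ)) = 0 :=
    Finset.sum_eq_zero fun k _ => by ring
  rw [hz, sub_zero]
  rfl

end MagnitudeHomology
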